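/- Let L > 0, ε > 0, and let k : [0,L] → ℝ be bounded away from zero (k(x) ≥ k₀ > 0), continuous at 0 and at L, and continuous outside a finite set of points of (0,L). Let α ∈ (0,1) and β₀ < β₁ in (0,1), and let (ρ₀, J₀) and (ρ₁, J₁) be generalized classical solutions of the area-averaged pedestrian boundary value problem with rates (α, β₀) and (α, β₁) respectively. Then J₀ < J₁. Likewise, for a fixed β ∈ (0,1) and α₀ < α₁ in (0,1), the corresponding fluxes satisfy J₀ < J₁. -/

import Mathlib

open Set MeasureTheory intervalIntegral

/-- A generalized classical solution `(ρ, J)` (with derivative `ρ'`) of the area-averaged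
pedestrian boundary value problem on `[0, L]`: `ρ` is continuous, differentiable at every
point where `k` is continuous, with `k·(−ε·ρ' + ρ(1−ρ)) = J` there, and the flux boundary
conditions `J = k(0)·α·(1−ρ(0))`, `J = k(L)·β·ρ(L)` hold. -/
def IsGeneralizedSolution (L ε α β : ℝ) (k ρ ρ' : ℝ → ℝ) (J : ℝ) : Prop :=
  ContinuousOn ρ (Icc 0 L) ∧
  (∀ x ∈ Icc (0:ℝ) L, ContinuousWithinAt k (Icc 0 L) x →
    HasDerivWithinAt ρ (ρ' x) (Icc 0 L) x ∧
    k x * (-ε * ρ' x + ρ x * (1 - ρ x)) = J) ∧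
  J = k 0 * (α * (1 - ρ 0)) ∧
  J = k L * (β * ρ L)


/-- Basic case: antitone endpoints bound with no exceptional points. -/
lemma ped_antitone_base (u u' : ℝ → ℝ) (a b : ℝ) (hab : a ≤ b)
    (hu : ContinuousOn u (Icc a b))
    (hd : ∀ x ∈ Ioo a b, HasDerivAt u (u' x) x ∧ u' x ≤ 0) : u b ≤ u a := by
  have H := antitoneOn_of_deriv_nonpos (convex_Icc a b) hu
    (by
      rw [interior_Icc]
      exact fun x hx => ((hd x hx).1.differentiableAt).differentiableWithinAt)
    (by
      rw [interior_Icc]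
      intro x hx
      rw [(hd x hx).1.deriv]
      exact (hd x hx).2)
  exact H (left_mem_Icc.2 hab) (right_mem_Icc.2 hab) hab

/-- Endpoint bound allowing a finite exceptional set. -/
lemma ped_antitone_aux (u u' : ℝ → ℝ) :
    ∀ (n : ℕ) (S : Finset ℝ), S.card = n → ∀ a b : ℝ, a ≤ b →
      ContinuousOn u (Icc a b) →
      (∀ x ∈ Ioo a b, x ∉ S → HasDerivAt u (u' x) x ∧ u' x ≤ 0) →
      u b ≤ u a := by
  intro n
  induction n with
  | zero =>
    intro S hS a b hab hu hd
    rw [Finset.card_eq_zero] at hS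
    subst hS
    exact ped_antitone_base u u' a b hab hu fun x hx => hd x hx (by simp)
  | succ n ih =>
    intro S hS a b hab hu hd
    by_cases hex : ∃ s ∈ S, s ∈ Ioo a b
    · obtain ⟨s, hsS, hs⟩ := hex
      have hcard : (S.erase s).card = n := by
        rw [Finset.card_erase_of_mem hsS, hS]; rfl
      have h1 : u s ≤ u a := by
        refine ih (S.erase s) hcard a s hs.1.le (hu.mono (Icc_subset_Icc le_rfl hs.2.le)) ?_
        intro x hx hxS
        refine hd x ⟨hx.1, hx.2.trans hs.2⟩ ?_
        intro hxinS
        exact hxS (Finset.mem_erase.2 ⟨ne_of_lt hx.2, hxinS⟩)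
      have h2 : u b ≤ u s := by
        refine ih (S.erase s) hcard s b hs.2.le (hu.mono (Icc_subset_Icc hs.1.le le_rfl)) ?_
        intro x hx hxS
        refine hd x ⟨hs.1.trans hx.1, hx.2⟩ ?_
        intro hxinS
        exact hxS (Finset.mem_erase.2 ⟨(ne_of_gt hx.1), hxinS⟩)
      exact h2.trans h1
    · push_neg at hex
      exact ped_antitone_base u u' a b hab hu fun x hx => hd x hx (fun h => hex x h hx)

/-- Grönwall-type comparison: if `w' ≤ c·w` off a finite set and `w` is continuous,
then `w L · exp(-∫c) ≤ w 0`. -/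
lemma ped_comparison (L : ℝ) (hL : 0 ≤ L) (S : Finset ℝ) (w w' c : ℝ → ℝ)
    (hw : ContinuousOn w (Icc 0 L)) (hc : ContinuousOn c (Icc 0 L))
    (hd : ∀ x ∈ Ioo (0:ℝ) L, x ∉ S → HasDerivAt w (w' x) x ∧ w' x ≤ c x * w x) :
    w L * Real.exp (-(∫ t in (0:ℝ)..L, c t)) ≤ w 0 := by
  set C : ℝ → ℝ := fun x => ∫ t in (0:ℝ)..x, c t with hC
  set u : ℝ → ℝ := fun x => w x * Real.exp (-(C x)) with hu
  have hCcont : ContinuousOn C (Icc 0 L) := by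
    have : IntegrableOn c (uIcc 0 L) := by
      rw [uIcc_of_le hL]
      exact hc.integrableOn_Icc
    have h2 := intervalIntegral.continuousOn_primitive_interval this
    rwa [uIcc_of_le hL] at h2
  have hucont : ContinuousOn u (Icc 0 L) :=
    hw.mul (Real.continuous_exp.comp_continuousOn hCcont.neg)
  have key : u L ≤ u 0 := by
    refine ped_antitone_aux u (fun x => (w' x - c x * w x) * Real.exp (-(C x)))
      S.card S rfl 0 L hL hucont ?_
    intro x hx hxS
    have hxIcc : x ∈ Icc (0:ℝ) L := Ioo_subset_Icc_self hx
    have hnhds : Icc (0:ℝ) L ∈ nhds x := Icc_mem_nhds hx.1 hx.2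
    have hcx : ContinuousAt c x := (hc x hxIcc).continuousAt hnhds
    have hCd : HasDerivAt C (c x) x := by
      refine intervalIntegral.integral_hasDerivAt_right ?_ ?_ hcx
      · exact (hc.mono (Icc_subset_Icc le_rfl hx.2.le)).intervalIntegrable_of_Icc hx.1.le
      · exact (hc.mono Ioo_subset_Icc_self).stronglyMeasurableAtFilter isOpen_Ioo x hx
    have hE : HasDerivAt (fun y => Real.exp (-(C y))) (Real.exp (-(C x)) * (-(c x))) x :=
      hCd.neg.exp
    obtain ⟨hwd, hle⟩ := hd x hx hxS
    constructor
    · have := hwd.mul hE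
      refine HasDerivAt.congr_deriv this ?_
      ring
    · have h1 : w' x - c x * w x ≤ 0 := by linarith
      exact mul_nonpos_of_nonpos_of_nonneg h1 (Real.exp_pos _).le
  have hu0 : u 0 = w 0 := by
    simp [hu, hC, intervalIntegral.integral_same]
  rw [hu0] at key
  exact key

/-- Any generalized solution has positive flux. -/
lemma ped_flux_pos (L ε k₀ : ℝ) (k : ℝ → ℝ)
    (hL : 0 < L) (hε : 0 < ε) (hk₀ : 0 < k₀)
    (hk : ∀ x ∈ Icc (0:ℝ) L, k₀ ≤ k x)
    (S : Finset ℝ)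
    (hScont : ∀ x ∈ Icc (0:ℝ) L \ ↑S, ContinuousWithinAt k (Icc 0 L) x)
    (α β : ℝ) (hα : α ∈ Ioo (0:ℝ) 1) (hβ : β ∈ Ioo (0:ℝ) 1)
    (ρ ρ' : ℝ → ℝ) (J : ℝ)
    (hsol : IsGeneralizedSolution L ε α β k ρ ρ' J) : 0 < J := by
  obtain ⟨hρc, hode, hbc0, hbcL⟩ := hsol
  have h0mem : (0:ℝ) ∈ Icc (0:ℝ) L := ⟨le_rfl, hL.le⟩
  have hLmem : L ∈ Icc (0:ℝ) L := ⟨hL.le, le_rfl⟩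
  have hk0pos : 0 < k 0 := lt_of_lt_of_le hk₀ (hk 0 h0mem)
  have hkLpos : 0 < k L := lt_of_lt_of_le hk₀ (hk L hLmem)
  by_contra hJ
  push_neg at hJ
  have hρ0 : 1 ≤ ρ 0 := by
    by_contra h
    push_neg at h
    nlinarith [mul_pos hk0pos (mul_pos hα.1 (by linarith : (0:ℝ) < 1 - ρ 0))]
  -- comparison with the constant 1/2
  have hcomp := ped_comparison L hL.le S (fun x => 1/2 - ρ x) (fun x => -ρ' x)
    (fun x => (1/2 - ρ x) / ε)
    (continuousOn_const.sub hρc) ((continuousOn_const.sub hρc).div_const ε) ?_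
  · have hE := Real.exp_pos (-(∫ t in (0:ℝ)..L, (fun x => (1/2 - ρ x) / ε) t))
    have hwL : (1/2 : ℝ) - ρ L < 0 := by nlinarith
    have : 0 < ρ L := by linarith
    nlinarith [mul_pos hkLpos (mul_pos hβ.1 this)]
  · intro x hx hxS
    have hxIcc : x ∈ Icc (0:ℝ) L := Ioo_subset_Icc_self hx
    have hkx : 0 < k x := lt_of_lt_of_le hk₀ (hk x hxIcc)
    obtain ⟨hder, heq⟩ := hode x hxIcc (hScont x ⟨hxIcc, by simpa using hxS⟩)
    have hρd : HasDerivAt ρ (ρ' x) x := hder.hasDerivAt (Icc_mem_nhds hx.1 hx.2)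
    refine ⟨hρd.const_sub (1/2 : ℝ), ?_⟩
    rw [div_mul_eq_mul_div, le_div_iff₀ hε]
    -- from k x * (-ε ρ' + ρ(1-ρ)) = J ≤ 0 and k x > 0 : -ε ρ' + ρ(1-ρ) ≤ 0
    have ht : -ε * ρ' x + ρ x * (1 - ρ x) ≤ 0 := by
      by_contra h
      push_neg at h
      nlinarith [mul_pos hkx h]
    nlinarith [sq_nonneg (1/2 - ρ x)]

/-- Comparison of two solutions: if `J₁ ≤ J₀` then initial ordering of densities propagates. -/
lemma ped_sol_compare (L ε k₀ : ℝ) (k : ℝ → ℝ)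
    (hL : 0 < L) (hε : 0 < ε) (hk₀ : 0 < k₀)
    (hk : ∀ x ∈ Icc (0:ℝ) L, k₀ ≤ k x)
    (S : Finset ℝ)
    (hScont : ∀ x ∈ Icc (0:ℝ) L \ ↑S, ContinuousWithinAt k (Icc 0 L) x)
    (α₀ β₀ α₁ β₁ : ℝ) (ρ₀ ρ₀' ρ₁ ρ₁' : ℝ → ℝ) (J₀ J₁ : ℝ)
    (hsol₀ : IsGeneralizedSolution L ε α₀ β₀ k ρ₀ ρ₀' J₀)
    (hsol₁ : IsGeneralizedSolution L ε α₁ β₁ k ρ₁ ρ₁' J₁)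
    (hJ : J₁ ≤ J₀) :
    (ρ₀ 0 ≤ ρ₁ 0 → ρ₀ L ≤ ρ₁ L) ∧ (ρ₀ 0 < ρ₁ 0 → ρ₀ L < ρ₁ L) := by
  obtain ⟨hρc₀, hode₀, hbc0₀, hbcL₀⟩ := hsol₀
  obtain ⟨hρc₁, hode₁, hbc0₁, hbcL₁⟩ := hsol₁
  have hcomp := ped_comparison L hL.le S (fun x => ρ₀ x - ρ₁ x) (fun x => ρ₀' x - ρ₁' x)
    (fun x => (1 - ρ₀ x - ρ₁ x) / ε)
    (hρc₀.sub hρc₁)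
    (((continuousOn_const.sub hρc₀).sub hρc₁).div_const ε) ?_
  · have hE := Real.exp_pos (-(∫ t in (0:ℝ)..L, (fun x => (1 - ρ₀ x - ρ₁ x) / ε) t))
    constructor
    · intro h0
      nlinarith
    · intro h0
      nlinarith
  · intro x hx hxS
    have hxIcc : x ∈ Icc (0:ℝ) L := Ioo_subset_Icc_self hx
    have hkx : 0 < k x := lt_of_lt_of_le hk₀ (hk x hxIcc)
    have hkc := hScont x ⟨hxIcc, by simpa using hxS⟩
    obtain ⟨hder₀, heq₀⟩ := hode₀ x hxIcc hkc
    obtain ⟨hder₁, heq₁⟩ := hode₁ x hxIcc hkc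
    have hρ₀d : HasDerivAt ρ₀ (ρ₀' x) x := hder₀.hasDerivAt (Icc_mem_nhds hx.1 hx.2)
    have hρ₁d : HasDerivAt ρ₁ (ρ₁' x) x := hder₁.hasDerivAt (Icc_mem_nhds hx.1 hx.2)
    refine ⟨hρ₀d.sub hρ₁d, ?_⟩
    rw [div_mul_eq_mul_div, le_div_iff₀ hε]
    have ht : 0 ≤ -ε * (ρ₀' x - ρ₁' x) + (ρ₀ x * (1 - ρ₀ x) - ρ₁ x * (1 - ρ₁ x)) := by
      by_contra h
      push_neg at h
      nlinarith [mul_pos hkx (by linarith :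
        (0:ℝ) < -(-ε * (ρ₀' x - ρ₁' x) + (ρ₀ x * (1 - ρ₀ x) - ρ₁ x * (1 - ρ₁ x))))]
    beta_reduce
    nlinarith [ht]

/-- Strict monotonicity of the flux `J` with respect to the inflow and outflow rates. -/
theorem flux_monotonicity
    (L ε k₀ : ℝ) (k : ℝ → ℝ)
    (hL : 0 < L) (hε : 0 < ε) (hk₀ : 0 < k₀)
    (hk : ∀ x ∈ Icc (0:ℝ) L, k₀ ≤ k x)
    (hk0 : ContinuousWithinAt k (Icc 0 L) 0)
    (hkL : ContinuousWithinAt k (Icc 0 L) L)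
    (hkc : ∃ S : Finset ℝ, ↑S ⊆ Ioo (0:ℝ) L ∧
      ∀ x ∈ Icc (0:ℝ) L \ ↑S, ContinuousWithinAt k (Icc 0 L) x) :
    (∀ (α β₀ β₁ : ℝ) (ρ₀ ρ₀' ρ₁ ρ₁' : ℝ → ℝ) (J₀ J₁ : ℝ),
      α ∈ Ioo (0:ℝ) 1 → β₀ ∈ Ioo (0:ℝ) 1 → β₁ ∈ Ioo (0:ℝ) 1 → β₀ < β₁ →
      IsGeneralizedSolution L ε α β₀ k ρ₀ ρ₀' J₀ →
      IsGeneralizedSolution L ε α β₁ k ρ₁ ρ₁' J₁ →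
      J₀ < J₁) ∧
    (∀ (β α₀ α₁ : ℝ) (ρ₀ ρ₀' ρ₁ ρ₁' : ℝ → ℝ) (J₀ J₁ : ℝ),
      β ∈ Ioo (0:ℝ) 1 → α₀ ∈ Ioo (0:ℝ) 1 → α₁ ∈ Ioo (0:ℝ) 1 → α₀ < α₁ →
      IsGeneralizedSolution L ε α₀ β k ρ₀ ρ₀' J₀ →
      IsGeneralizedSolution L ε α₁ β k ρ₁ ρ₁' J₁ →
      J₀ < J₁) := by
  obtain ⟨S, _hSsub, hScont⟩ := hkc
  have h0mem : (0:ℝ) ∈ Icc (0:ℝ) L := ⟨le_rfl, hL.le⟩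
  have hLmem : L ∈ Icc (0:ℝ) L := ⟨hL.le, le_rfl⟩
  have hk0pos : 0 < k 0 := lt_of_lt_of_le hk₀ (hk 0 h0mem)
  have hkLpos : 0 < k L := lt_of_lt_of_le hk₀ (hk L hLmem)
  constructor
  · intro α β₀ β₁ ρ₀ ρ₀' ρ₁ ρ₁' J₀ J₁ hα hβ₀ hβ₁ hββ hsol₀ hsol₁
    by_contra hlt
    push_neg at hlt  -- J₁ ≤ J₀
    have hJ₁pos : 0 < J₁ :=
      ped_flux_pos L ε k₀ k hL hε hk₀ hk S hScont α β₁ hα hβ₁ ρ₁ ρ₁' J₁ hsol₁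
    have hbc0₀ := hsol₀.2.2.1
    have hbc0₁ := hsol₁.2.2.1
    have hbcL₀ := hsol₀.2.2.2
    have hbcL₁ := hsol₁.2.2.2
    have h00 : ρ₀ 0 ≤ ρ₁ 0 := by
      by_contra h
      push_neg at h
      nlinarith [mul_pos (mul_pos hk0pos hα.1) (sub_pos.2 h)]
    have hLL : ρ₀ L ≤ ρ₁ L :=
      (ped_sol_compare L ε k₀ k hL hε hk₀ hk S hScont α β₀ α β₁ ρ₀ ρ₀' ρ₁ ρ₁' J₀ J₁
        hsol₀ hsol₁ hlt).1 h00
    have hρ₁L : 0 < ρ₁ L := by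
      by_contra h
      push_neg at h
      nlinarith [mul_pos hkLpos hβ₁.1, mul_nonneg (mul_pos hkLpos hβ₁.1).le (neg_nonneg.2 h)]
    have e1 : k L * (β₀ * ρ₀ L) ≤ k L * (β₀ * ρ₁ L) := by
      have := mul_le_mul_of_nonneg_left hLL (mul_pos hkLpos hβ₀.1).le
      nlinarith [this]
    have e2 : k L * (β₀ * ρ₁ L) < k L * (β₁ * ρ₁ L) := by
      nlinarith [mul_pos (mul_pos hkLpos hρ₁L) (sub_pos.2 hββ)]
    linarith [hbcL₀, hbcL₁]
  · intro β α₀ α₁ ρ₀ ρ₀' ρ₁ ρ₁' J₀ J₁ hβ hα₀ hα₁ hαα hsol₀ hsol₁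
    by_contra hlt
    push_neg at hlt  -- J₁ ≤ J₀
    have hJ₁pos : 0 < J₁ :=
      ped_flux_pos L ε k₀ k hL hε hk₀ hk S hScont α₁ β hα₁ hβ ρ₁ ρ₁' J₁ hsol₁
    have hbc0₀ := hsol₀.2.2.1
    have hbc0₁ := hsol₁.2.2.1
    have hbcL₀ := hsol₀.2.2.2
    have hbcL₁ := hsol₁.2.2.2
    have h1ρ₁0 : 0 < 1 - ρ₁ 0 := by
      by_contra h
      push_neg at h
      nlinarith [mul_pos hk0pos hα₁.1, mul_nonneg (mul_pos hk0pos hα₁.1).le (neg_nonneg.2 h)]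
    have h00 : ρ₀ 0 < ρ₁ 0 := by
      by_contra h
      push_neg at h
      nlinarith [mul_pos (mul_pos hk0pos (sub_pos.2 hαα)) h1ρ₁0,
        mul_nonneg (mul_pos hk0pos hα₀.1).le (sub_nonneg.2 h)]
    have hLL : ρ₀ L < ρ₁ L :=
      (ped_sol_compare L ε k₀ k hL hε hk₀ hk S hScont α₀ β α₁ β ρ₀ ρ₀' ρ₁ ρ₁' J₀ J₁
        hsol₀ hsol₁ hlt).2 h00
    nlinarith [mul_pos (mul_pos hkLpos hβ.1) (sub_pos.2 hLL)]
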